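/- Finite termination of the cut-addition process: Let X ⊆ ℝ^d and Ξ ⊆ ℝ^m be compact, ε > 0, and g : ℝ^d × ℝ^m → ℝ Lipschitz on X × Ξ. Suppose sequences (x^k) ⊆ X and finite sets Ξ^k ⊆ Ξ are constructed so that x^{k+1} satisfies g(x^{k+1}, ξ̄) ≤ 0 for all ξ̄ ∈ Ξ^k, and Ξ^{k+1} = Ξ^k ∪ {ξ^{k+1}} only when ξ^{k+1} ∈ Ξ satisfies g(x^{k+1}, ξ^{k+1}) ≥ max_{ξ∈Ξ} g(x^{k+1}, ξ) − ε/2 and g(x^{k+1}, ξ^{k+1}) > ε/2 (otherwise Ξ^{k+1} = Ξ^k). Then there exists K ∈ ℕ such that Ξ^{k₁} = Ξ^{k₂} for all k₁, k₂ ≥ K, and max_{ξ∈Ξ} g(x^k, ξ) ≤ ε for all k ≥ K. -/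
import Mathlib


/-- Lemma A.1: finite termination of the cut-addition process. -/
theorem cut_addition_finite_termination {d m : ℕ}
    (X : Set (EuclideanSpace ℝ (Fin d))) (Ξ : Set (EuclideanSpace ℝ (Fin m)))
    (hX : IsCompact X) (hΞ : IsCompact Ξ) (hΞne : Ξ.Nonempty)
    (g : EuclideanSpace ℝ (Fin d) → EuclideanSpace ℝ (Fin m) → ℝ)
    (L : ℝ) (hL : 0 < L)
    (hLip : ∀ x ∈ X, ∀ x' ∈ X, ∀ ξ ∈ Ξ, ∀ ξ' ∈ Ξ,
      |g x ξ - g x' ξ'| ≤ L * (‖x - x'‖ + ‖ξ - ξ'‖))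
    (ε : ℝ) (hε : 0 < ε)
    (x : ℕ → EuclideanSpace ℝ (Fin d)) (hx : ∀ k, x k ∈ X)
    (Ξs : ℕ → Set (EuclideanSpace ℝ (Fin m)))
    (hΞs0 : Ξs 0 = ∅) (hΞsub : ∀ k, Ξs k ⊆ Ξ) (hΞfin : ∀ k, (Ξs k).Finite)
    -- primal feasibility: `x (k+1)` satisfies the constraints imposed by the cuts in `Ξs k`
    (hfeas : ∀ k, ∀ ξ' ∈ Ξs k, g (x (k + 1)) ξ' ≤ 0)
    -- cut addition: either a valid cut is added, or no valid cut exists and the set is unchanged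
    (hcut : ∀ k, (∃ ξ' ∈ Ξ,
        g (x (k + 1)) ξ' ≥ sSup ((fun ξ => g (x (k + 1)) ξ) '' Ξ) - ε / 2 ∧
        g (x (k + 1)) ξ' > ε / 2 ∧ Ξs (k + 1) = Ξs k ∪ {ξ'}) ∨
      (Ξs (k + 1) = Ξs k ∧ ¬ ∃ ξ' ∈ Ξ,
        g (x (k + 1)) ξ' ≥ sSup ((fun ξ => g (x (k + 1)) ξ) '' Ξ) - ε / 2 ∧
        g (x (k + 1)) ξ' > ε / 2)) :
    ∃ K : ℕ, 1 ≤ K ∧ (∀ k₁ k₂, K ≤ k₁ → K ≤ k₂ → Ξs k₁ = Ξs k₂) ∧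
      ∀ k, K ≤ k → ∀ ξ ∈ Ξ, g (x k) ξ ≤ ε := by
  classical
  -- Lipschitz in ξ for fixed iterate
  have hLipξ : ∀ k, ∀ ξ ∈ Ξ, ∀ ξ' ∈ Ξ, |g (x k) ξ - g (x k) ξ'| ≤ L * ‖ξ - ξ'‖ := by
    intro k ξ hξ ξ' hξ'
    have h := hLip (x k) (hx k) (x k) (hx k) ξ hξ ξ' hξ'
    simpa using h
  -- monotonicity of the cut sets
  have mono : Monotone Ξs := by
    apply monotone_nat_of_le_succ
    intro k
    rcases hcut k with ⟨ξ', _, _, _, h⟩ | ⟨h, _⟩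
    · rw [h]; exact Set.subset_union_left
    · rw [h]
  set δ := ε / (2 * L) with hδ
  have hδpos : 0 < δ := by positivity
  -- each cut set is δ-separated
  have sep : ∀ k, ∀ ξa ∈ Ξs k, ∀ ξb ∈ Ξs k, ξa ≠ ξb → δ ≤ ‖ξa - ξb‖ := by
    intro k
    induction k with
    | zero => simp [hΞs0]
    | succ k ih =>
      rcases hcut k with ⟨ξ', hξ'Ξ, _, hgt, heq⟩ | ⟨heq, _⟩
      · have key : ∀ ξa ∈ Ξs k, δ ≤ ‖ξa - ξ'‖ := by
          intro ξa ha
          have h0 : g (x (k+1)) ξa ≤ 0 := hfeas k ξa ha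
          have hlt : ε / 2 < |g (x (k+1)) ξa - g (x (k+1)) ξ'| := by
            rw [abs_sub_comm]
            calc ε / 2 < g (x (k+1)) ξ' - g (x (k+1)) ξa := by linarith
              _ ≤ |g (x (k+1)) ξ' - g (x (k+1)) ξa| := le_abs_self _
          have h2 := hLipξ (k+1) ξa (hΞsub k ha) ξ' hξ'Ξ
          have h3 : ε / 2 < L * ‖ξa - ξ'‖ := lt_of_lt_of_le hlt h2
          rw [hδ, div_le_iff₀ (by positivity : (0:ℝ) < 2 * L)]
          nlinarith
        intro ξa ha ξb hb hne
        rw [heq] at ha hb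
        rcases ha with ha | ha <;> rcases hb with hb | hb
        · exact ih ξa ha ξb hb hne
        · rcases hb with rfl; exact key ξa ha
        · rcases ha with rfl; rw [norm_sub_rev]; exact key ξb hb
        · rcases ha with rfl; rcases hb with rfl; exact absurd rfl hne
      · rw [heq]; exact ih
  -- uniform cardinality bound via total boundedness
  obtain ⟨t, htfin, htcov⟩ :=
    (Metric.totallyBounded_iff.mp hΞ.totallyBounded) (δ / 2) (by positivity)
  have cardbd : ∀ k, (Ξs k).ncard ≤ t.ncard := by
    intro k
    have hmap : ∀ ξa : EuclideanSpace ℝ (Fin m),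
        ∃ c, ξa ∈ Ξs k → c ∈ t ∧ ξa ∈ Metric.ball c (δ / 2) := by
      intro ξa
      by_cases ha : ξa ∈ Ξs k
      · obtain ⟨c, hc, hcb⟩ := Set.mem_iUnion₂.mp (htcov (hΞsub k ha))
        exact ⟨c, fun _ => ⟨hc, hcb⟩⟩
      · exact ⟨hΞne.choose, fun h => absurd h ha⟩
    choose f hf using hmap
    refine Set.ncard_le_ncard_of_injOn f (fun a ha => (hf a ha).1) ?_ htfin
    intro a ha b hb hab
    by_contra hne
    have hsep := sep k a ha b hb hne
    have da := (hf a ha).2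
    have db := (hf b hb).2
    rw [Metric.mem_ball] at da db
    have hdab : dist a b < δ := by
      have h1 : dist a b ≤ dist a (f a) + dist (f a) b := dist_triangle _ _ _
      rw [hab] at h1 da
      rw [dist_comm (f b) b] at h1
      linarith
    rw [dist_eq_norm] at hdab
    linarith
  -- the cardinalities are monotone and bounded, hence attain a maximum
  have hbdd : BddAbove (Set.range fun k => (Ξs k).ncard) := by
    refine ⟨t.ncard, ?_⟩
    rintro n ⟨k, rfl⟩
    exact cardbd k
  have hne' : (Set.range fun k => (Ξs k).ncard).Nonempty := ⟨(Ξs 0).ncard, 0, rfl⟩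
  obtain ⟨K, hK⟩ := Nat.sSup_mem hne' hbdd
  have hK' : (Ξs K).ncard = sSup (Set.range fun k => (Ξs k).ncard) := hK
  have hstable : ∀ k, K ≤ k → Ξs k = Ξs K := by
    intro k hk
    refine (Set.eq_of_subset_of_ncard_le (mono hk) ?_ (hΞfin k)).symm
    rw [hK']
    exact le_csSup hbdd ⟨k, rfl⟩
  refine ⟨K + 1, le_add_self, ?_, ?_⟩
  · intro k₁ k₂ h1 h2
    rw [hstable k₁ (by omega), hstable k₂ (by omega)]
  · intro k hk ξ hξ
    obtain ⟨j, rfl⟩ : ∃ j, k = j + 1 := ⟨k - 1, by omega⟩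
    have hjK : K ≤ j := by omega
    rcases hcut j with ⟨ξ', hξ'Ξ, hge, hgt, heq⟩ | ⟨_, hno⟩
    · -- impossible in the stable regime: ξ' would already be feasible
      have hmem : ξ' ∈ Ξs j := by
        have : Ξs (j + 1) = Ξs j := by
          rw [hstable (j + 1) (by omega), hstable j hjK]
        rw [← this, heq]
        exact Set.mem_union_right _ rfl
      have := hfeas j ξ' hmem
      linarith
    · by_contra hgt'
      push_neg at hgt'
      set S := (fun ξ => g (x (j + 1)) ξ) '' Ξ with hS
      have hSne : S.Nonempty := hΞne.image _
      -- S is bounded above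
      obtain ⟨ξ0, hξ0⟩ := hΞne
      obtain ⟨r, hr⟩ := hΞ.isBounded.subset_closedBall ξ0
      have hbddS : BddAbove S := by
        refine ⟨g (x (j + 1)) ξ0 + L * r, ?_⟩
        rintro y ⟨ξ₁, hξ₁, rfl⟩
        have h1 := hLipξ (j + 1) ξ₁ hξ₁ ξ0 hξ0
        have h2 : ‖ξ₁ - ξ0‖ ≤ r := by
          have := hr hξ₁
          rwa [Metric.mem_closedBall, dist_eq_norm] at this
        have h3 : g (x (j + 1)) ξ₁ - g (x (j + 1)) ξ0 ≤ L * ‖ξ₁ - ξ0‖ :=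
          le_trans (le_abs_self _) h1
        nlinarith
      have hle : g (x (j + 1)) ξ ≤ sSup S := le_csSup hbddS ⟨ξ, hξ, rfl⟩
      obtain ⟨y, hyS, hy⟩ := exists_lt_of_lt_csSup hSne (by linarith : sSup S - ε / 2 < sSup S)
      obtain ⟨ξ₂, hξ₂, rfl⟩ := hyS
      exact hno ⟨ξ₂, hξ₂, le_of_lt hy, by linarith⟩
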